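/- For every k ≥ 3 and every proper cyclic rotation α of A_k (i.e., α = A_k[i..|A_k|]·A_k[1..i-1] for some 2 ≤ i ≤ |A_k| with α ≠ A_k), the number of occurrences of α in A_k A_k A_k is exactly 2, in A_k B_k is exactly 1, and in B_k A_k is exactly 0, where A_k = S_{k-2} and B_k = Â_k. -/
import Mathlib


/-- The morphism φ: a ↦ ab, b ↦ aa, with `false = a`, `true = b`. -/
def pdPhi (c : Bool) : List Bool := if c then [false, false] else [false, true]

/-- The k-th period-doubling sequence. -/
def pd : ℕ → List Bool
  | 0 => [false]
  | k + 1 => (pd k).flatMap pdPhi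

/-- `hat w` : `w` with its last character flipped. -/
def hat (w : List Bool) : List Bool := w.dropLast ++ (w.getLast?.map Bool.not).toList

/-- `y` occurs in `w` at (0-based) position `i`. -/
def OccAt {α : Type*} (y w : List α) (i : ℕ) : Prop :=
  i + y.length ≤ w.length ∧ (w.drop i).take y.length = y

/-- The number of occurrences (starting positions) of `y` in `w`. -/
def occCount {α : Type*} [DecidableEq α] (y w : List α) : ℕ :=
  ((List.range (w.length + 1)).filter
    (fun i => decide (i + y.length ≤ w.length ∧ (w.drop i).take y.length = y))).length

lemma hat_concat (u : List Bool) (c : Bool) : hat (u ++ [c]) = u ++ [!c] := by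
  simp [hat]

lemma hat_append (x y : List Bool) (hy : y ≠ []) : hat (x ++ y) = x ++ hat y := by
  obtain ⟨L, b, rfl⟩ := (y.eq_nil_or_concat).resolve_left hy
  simp [List.concat_eq_append, ← List.append_assoc, hat_concat]

lemma hat_hat (w : List Bool) : hat (hat w) = w := by
  obtain rfl | ⟨L, b, rfl⟩ := w.eq_nil_or_concat
  · rfl
  · simp [List.concat_eq_append, hat_concat]

lemma hat_length (w : List Bool) : (hat w).length = w.length := by
  obtain rfl | ⟨L, b, rfl⟩ := w.eq_nil_or_concat
  · rfl
  · simp [List.concat_eq_append, hat_concat]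

lemma hat_ne (w : List Bool) (hw : w ≠ []) : hat w ≠ w := by
  obtain ⟨L, b, rfl⟩ := (w.eq_nil_or_concat).resolve_left hw
  simp [List.concat_eq_append, hat_concat]

lemma hat_take (w : List Bool) (i : ℕ) (hi : i + 1 ≤ w.length) :
    (hat w).take i = w.take i := by
  obtain rfl | ⟨L, b, rfl⟩ := w.eq_nil_or_concat
  · rfl
  · simp only [List.concat_eq_append, hat_concat]
    simp at hi
    rw [List.take_append_of_le_length hi, List.take_append_of_le_length hi]

lemma pd_ne_nil (n : ℕ) : pd n ≠ [] := by
  induction n with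
  | zero => simp [pd]
  | succ n ih =>
    obtain ⟨c, l, h⟩ := List.exists_cons_of_ne_nil ih
    simp [pd, h, pdPhi]
    cases c <;> simp

lemma flatMap_hat (w : List Bool) (hw : w ≠ []) :
    (hat w).flatMap pdPhi = hat (w.flatMap pdPhi) := by
  obtain ⟨L, b, rfl⟩ := (w.eq_nil_or_concat).resolve_left hw
  simp only [List.concat_eq_append, hat_concat, List.flatMap_append]
  rw [hat_append _ _ (by cases b <;> simp [pdPhi])]
  cases b <;> simp [pdPhi, hat]

lemma pd_succ (n : ℕ) : pd (n + 1) = pd n ++ hat (pd n) := by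
  induction n with
  | zero => simp [pd, pdPhi, hat]
  | succ n ih =>
    show (pd (n+1)).flatMap pdPhi = _
    conv_lhs => rw [ih]
    rw [List.flatMap_append, flatMap_hat _ (pd_ne_nil n)]; rfl

lemma hat_ne_nil (w : List Bool) (hw : w ≠ []) : hat w ≠ [] := by
  rw [← List.length_pos_iff, hat_length]
  exact List.length_pos_iff.2 hw

lemma hat_pd_succ (n : ℕ) : hat (pd (n + 1)) = pd n ++ pd n := by
  rw [pd_succ, hat_append _ _ (hat_ne_nil _ (pd_ne_nil n)), hat_hat]

lemma pd_length (n : ℕ) : (pd n).length = 2 ^ n := by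
  induction n with
  | zero => rfl
  | succ n ih => rw [pd_succ, List.length_append, hat_length, ih]; ring

lemma rot_fix_mul {w : List Bool} {p : ℕ} (h : w.rotate p = w) :
    ∀ k j, w.rotate (j + k * p) = w.rotate j := by
  intro k
  induction k with
  | zero => simp
  | succ k ih =>
    intro j
    have : j + (k+1) * p = (p + j) + k * p := by ring
    rw [this, ih (p + j), ← List.rotate_rotate, h]

lemma rot_fix_mod {w : List Bool} {p a : ℕ} (hp : w.rotate p = w) (ha : w.rotate a = w) :
    w.rotate (a % p) = w := by
  rcases Nat.eq_zero_or_pos p with rfl | hp0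
  · simpa using ha
  · have : a = a % p + (a / p) * p := by
      rw [Nat.mul_comm]; exact (Nat.mod_add_div a p).symm
    rw [this, rot_fix_mul hp] at ha
    exact ha

lemma rot_fix_gcd {w : List Bool} : ∀ a b : ℕ, w.rotate a = w → w.rotate b = w →
    w.rotate (Nat.gcd a b) = w := by
  intro a
  induction a using Nat.strong_induction_on with
  | _ a ih =>
    intro b ha hb
    rcases Nat.eq_zero_or_pos a with rfl | ha0
    · simpa using hb
    · rw [Nat.gcd_rec]
      exact ih (b % a) (Nat.mod_lt _ ha0) a (rot_fix_mod ha hb) ha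

lemma pd_rot_eq_self {m u : ℕ} (h : (pd (m+1)).rotate u = pd (m+1)) : u % 2 ^ (m+1) = 0 := by
  set A := pd (m+1) with hA
  have hlen : A.length = 2 ^ (m+1) := pd_length (m+1)
  by_contra hr
  set r := u % 2 ^ (m+1) with hrdef
  have hr0 : 0 < r := Nat.pos_of_ne_zero hr
  have hrL : r < 2 ^ (m+1) := Nat.mod_lt _ (by positivity)
  have hrot : A.rotate r = A := by
    rw [hrdef, ← hlen, List.rotate_mod, h]
  have hrotL : A.rotate (2 ^ (m+1)) = A := by rw [← hlen, List.rotate_length]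
  have hg : A.rotate (Nat.gcd r (2 ^ (m+1))) = A := rot_fix_gcd _ _ hrot hrotL
  set g := Nat.gcd r (2 ^ (m+1)) with hgdef
  have hgdvd : g ∣ 2 ^ (m+1) := Nat.gcd_dvd_right _ _
  have hgle : g ≤ r := Nat.le_of_dvd hr0 (Nat.gcd_dvd_left _ _)
  have hgdvd' : g ∣ 2 ^ m := by
    obtain ⟨j, hj, hje⟩ := (Nat.dvd_prime_pow Nat.prime_two).1 hgdvd
    have hjm : j ≤ m := by
      rcases Nat.lt_or_ge j (m+1) with h' | h'
      · omega
      · exfalso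
        have : 2 ^ (m+1) ≤ g := hje ▸ Nat.pow_le_pow_right (by norm_num) h'
        omega
    exact hje ▸ pow_dvd_pow 2 hjm
  obtain ⟨c, hc⟩ := hgdvd'
  have hhalf : A.rotate (2 ^ m) = A := by
    have := rot_fix_mul hg c 0
    rwa [Nat.zero_add, Nat.mul_comm, ← hc, List.rotate_zero] at this
  have hAeq : A = pd m ++ hat (pd m) := pd_succ m
  have : hat (pd m) ++ pd m = pd m ++ hat (pd m) := by
    have h2 : (pd m).length = 2 ^ m := pd_length m
    calc hat (pd m) ++ pd m = A.rotate (2 ^ m) := by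
          rw [hAeq, ← h2, List.rotate_append_length_eq]
      _ = A := hhalf
      _ = pd m ++ hat (pd m) := hAeq
  have := (List.append_inj this (by rw [hat_length])).1
  exact hat_ne (pd m) (pd_ne_nil m) this

lemma pd_rot_inj {m s t : ℕ} (hs : s < 2 ^ (m+1)) (ht : t < 2 ^ (m+1))
    (h : (pd (m+1)).rotate s = (pd (m+1)).rotate t) : s = t := by
  set A := pd (m+1) with hA
  set L := 2 ^ (m+1) with hL
  have hlen : A.length = L := pd_length (m+1)
  have hLpos : 0 < L := by positivity
  have key : A.rotate (s + (L - t)) = A := by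
    rw [← List.rotate_rotate, h, List.rotate_rotate]
    have : t + (L - t) = L := by omega
    rw [this, ← hlen, List.rotate_length]
  have hmod := pd_rot_eq_self key
  obtain ⟨c, hc⟩ := (Nat.dvd_of_mod_eq_zero hmod : L ∣ (s + (L - t)))
  have hc2 : c < 2 := by
    by_contra hcge
    push_neg at hcge
    have : L * 2 ≤ L * c := Nat.mul_le_mul_left _ hcge
    omega
  interval_cases c <;> omega

lemma rot_sq (C : List Bool) (j : ℕ) :
    ∃ D : List Bool, D.length = C.length ∧ (C ++ C).rotate j = D ++ D := by
  rcases eq_or_ne C [] with rfl | hC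
  · exact ⟨[], rfl, by simp⟩
  have hCpos : 0 < C.length := List.length_pos_iff.2 hC
  have hfix : (C ++ C).rotate C.length = C ++ C := List.rotate_append_length_eq C C
  have hred : (C ++ C).rotate j = (C ++ C).rotate (j % C.length) := by
    conv_lhs => rw [show j = j % C.length + (j / C.length) * C.length by
      rw [Nat.mul_comm]; exact (Nat.mod_add_div j C.length).symm]
    exact rot_fix_mul hfix _ _
  set j' := j % C.length with hj'
  have hj'lt : j' < C.length := Nat.mod_lt _ hCpos
  refine ⟨C.drop j' ++ C.take j', by simp; omega, ?_⟩
  rw [hred, List.rotate_eq_drop_append_take (by simp; omega)]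
  rw [List.drop_append_of_le_length hj'lt.le, List.take_append_of_le_length hj'lt.le]
  rw [List.append_assoc, List.append_assoc]
  congr 1
  rw [← List.append_assoc, List.take_append_drop]

lemma pd_not_rot_hat (m : ℕ) : ¬ (pd (m+1)) ~r (hat (pd (m+1))) := by
  intro h
  obtain ⟨j, hj⟩ := (h.symm : hat (pd (m+1)) ~r pd (m+1))
  rw [hat_pd_succ] at hj
  obtain ⟨D, hD, hDe⟩ := rot_sq (pd m) j
  rw [hDe] at hj
  have hAeq : pd (m+1) = pd m ++ hat (pd m) := pd_succ m
  rw [hAeq] at hj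
  obtain ⟨h1, h2⟩ := List.append_inj hj (by rw [hD, pd_length])
  exact hat_ne (pd m) (pd_ne_nil m) (h2.symm.trans h1)

lemma take_drop_self {A : List Bool} {i : ℕ} (hi : i ≤ A.length) :
    (A.drop i).take A.length = A.drop i := by
  apply List.take_of_length_le; simp

lemma factor_double {A : List Bool} {i : ℕ} (hi : i ≤ A.length) :
    ((A ++ A).drop i).take A.length = A.drop i ++ A.take i := by
  rw [List.drop_append_of_le_length hi, List.take_append,
    take_drop_self hi, List.length_drop]
  congr 1
  rw [show A.length - (A.length - i) = i by omega]

lemma factor_triple {A : List Bool} {i : ℕ} (hA : A ≠ []) (hi : i ≤ 2 * A.length) :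
    ((A ++ A ++ A).drop i).take A.length = A.rotate (i % A.length) := by
  have hL : 0 < A.length := List.length_pos_iff.2 hA
  rw [List.append_assoc]
  rcases le_or_gt i A.length with h | h
  · rw [List.drop_append_of_le_length h, List.take_append,
      take_drop_self h, List.length_drop, List.rotate_mod,
      List.rotate_eq_drop_append_take h, show A.length - (A.length - i) = i by omega,
      List.take_append_of_le_length h]
  · rw [List.drop_append, List.drop_eq_nil_of_le (by omega),
      List.nil_append, factor_double (by omega), ← List.rotate_eq_drop_append_take (by omega),
      ← List.rotate_mod A (i - A.length), ← Nat.mod_eq_sub_mod h.le]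

lemma factor_AB {A : List Bool} {i : ℕ} (hi : i < A.length) :
    ((A ++ hat A).drop i).take A.length = A.rotate i := by
  rw [List.drop_append_of_le_length hi.le, List.take_append,
    take_drop_self hi.le, List.length_drop, hat_take _ _ (by omega),
    show A.length - (A.length - i) = i by omega,
    List.rotate_eq_drop_append_take hi.le]

lemma factor_BA {A : List Bool} {i : ℕ} (hi0 : 0 < i) (hi : i < A.length) :
    ((hat A ++ A).drop i).take A.length = (hat A).rotate i := by
  have hl : (hat A).length = A.length := hat_length A
  rw [List.drop_append_of_le_length (by omega), List.take_append]
  rw [show ((hat A).drop i).take A.length = (hat A).drop i from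
      List.take_of_length_le (by simp [hl])]
  rw [List.length_drop, hl, show A.length - (A.length - i) = i by omega,
    List.rotate_eq_drop_append_take (by omega), hat_take _ _ (by omega)]

lemma occCount_eq_card (y w : List Bool) :
    occCount y w = ((Finset.range (w.length + 1)).filter
      (fun i => i + y.length ≤ w.length ∧ (w.drop i).take y.length = y)).card := rfl

/-- For `k ≥ 3` and any proper cyclic rotation `α` of `A = S_{k-2}`, the number of
occurrences of `α` in `AAA`, `AB`, `BA` is `2`, `1`, `0` respectively, where `B = Â`. -/
theorem pd_rotation_occurrences (k : ℕ) (hk : 3 ≤ k) (t : ℕ)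
    (ht : t < (pd (k-2)).length)
    (hproper : (pd (k-2)).drop t ++ (pd (k-2)).take t ≠ pd (k-2)) :
    occCount ((pd (k-2)).drop t ++ (pd (k-2)).take t)
        (pd (k-2) ++ pd (k-2) ++ pd (k-2)) = 2 ∧
    occCount ((pd (k-2)).drop t ++ (pd (k-2)).take t)
        (pd (k-2) ++ hat (pd (k-2))) = 1 ∧
    occCount ((pd (k-2)).drop t ++ (pd (k-2)).take t)
        (hat (pd (k-2)) ++ pd (k-2)) = 0 := by
  obtain ⟨m, hm⟩ : ∃ m, k - 2 = m + 1 := ⟨k - 3, by omega⟩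
  rw [hm] at ht hproper ⊢
  set A := pd (m+1) with hA
  set L := A.length with hL
  have hLpow : L = 2 ^ (m+1) := pd_length (m+1)
  have hLpos : 0 < L := by rw [hLpow]; positivity
  have hAne : A ≠ [] := pd_ne_nil (m+1)
  have hBl : (hat A).length = L := hat_length A
  set α := A.drop t ++ A.take t with hα
  have hαlen : α.length = L := by simp [hα, hL]; omega
  have hαrot : α = A.rotate t := (List.rotate_eq_drop_append_take ht.le).symm
  have ht0 : t ≠ 0 := by
    rintro rfl
    exact hproper (by simp [hα])
  have hinj : ∀ s : ℕ, s < L → A.rotate s = A.rotate t → s = t := by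
    intro s hs h
    exact pd_rot_inj (by rwa [← hLpow]) (by rwa [← hLpow]) h
  have hnotrot : ¬ A ~r hat A := pd_not_rot_hat m
  have hBne : ∀ j : ℕ, (hat A).rotate j ≠ A.rotate t := by
    intro j h
    have h1 : A ~r A.rotate t := ⟨t, rfl⟩
    have h2 : (hat A) ~r A.rotate t := ⟨j, h⟩
    exact hnotrot (h1.trans h2.symm)
  refine ⟨?_, ?_, ?_⟩
  · -- AAA
    rw [occCount_eq_card]
    have hwl : (A ++ A ++ A).length = 3 * L := by simp [hL]; ring
    have key : ∀ i ∈ Finset.range ((A ++ A ++ A).length + 1),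
        ((i + α.length ≤ (A ++ A ++ A).length ∧ ((A ++ A ++ A).drop i).take α.length = α)
          ↔ (i = t ∨ i = t + L)) := by
      intro i _
      rw [hwl, hαlen]
      constructor
      · rintro ⟨h1, h2⟩
        have hi2 : i ≤ 2 * L := by omega
        rw [hαrot, hL, factor_triple hAne (by omega)] at h2
        have hmod := hinj (i % A.length)
          (by rw [hL]; exact Nat.mod_lt _ (List.length_pos_iff.2 hAne)) h2
        have hdiv := Nat.mod_add_div i A.length
        set q := i / A.length with hq
        have hq2 : q ≤ 2 := by
          by_contra hc
          push_neg at hc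
          have h3 : A.length * 3 ≤ A.length * q := Nat.mul_le_mul_left _ hc
          omega
        interval_cases q <;> omega
      · rintro (rfl | rfl)
        · refine ⟨by omega, ?_⟩
          rw [hαrot, hL, factor_triple hAne (by omega),
            Nat.mod_eq_of_lt (show i < A.length by omega)]
        · refine ⟨by omega, ?_⟩
          rw [hαrot, hL, factor_triple hAne (by omega), Nat.add_mod_right,
            Nat.mod_eq_of_lt (show t < A.length by omega)]
    rw [Finset.filter_congr key]
    have hset : (Finset.range ((A ++ A ++ A).length + 1)).filter (fun i => i = t ∨ i = t + L)
        = {t, t + L} := by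
      ext i
      simp only [Finset.mem_filter, Finset.mem_range, Finset.mem_insert, Finset.mem_singleton]
      constructor
      · tauto
      · rintro (rfl | rfl) <;> (rw [hwl]; omega)
    rw [hset, Finset.card_insert_of_notMem (by simp; omega), Finset.card_singleton]
  · -- AB
    rw [occCount_eq_card]
    have hwl : (A ++ hat A).length = 2 * L := by simp [hBl, hL]; ring
    have key : ∀ i ∈ Finset.range ((A ++ hat A).length + 1),
        ((i + α.length ≤ (A ++ hat A).length ∧ ((A ++ hat A).drop i).take α.length = α)
          ↔ i = t) := by
      intro i _
      rw [hwl, hαlen]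
      constructor
      · rintro ⟨h1, h2⟩
        have hiL : i ≤ L := by omega
        rcases Nat.lt_or_ge i L with hlt | hge
        · rw [hαrot, hL, factor_AB (show i < A.length by omega)] at h2
          exact hinj i hlt h2
        · exfalso
          have hiL' : i = L := by omega
          subst hiL'
          rw [hαrot, hL, List.drop_left,
            List.take_of_length_le (le_of_eq (hat_length A))] at h2
          exact hBne 0 (by rw [List.rotate_zero]; exact h2)
      · rintro rfl
        refine ⟨by omega, ?_⟩
        rw [hαrot, hL, factor_AB (show i < A.length by omega)]
    rw [Finset.filter_congr key]
    have hset : (Finset.range ((A ++ hat A).length + 1)).filter (fun i => i = t) = {t} := by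
      ext i
      simp only [Finset.mem_filter, Finset.mem_range, Finset.mem_singleton]
      constructor
      · tauto
      · rintro rfl; rw [hwl]; omega
    rw [hset, Finset.card_singleton]
  · -- BA
    rw [occCount_eq_card]
    have hwl : (hat A ++ A).length = 2 * L := by simp [hBl, hL]; ring
    have key : ∀ i ∈ Finset.range ((hat A ++ A).length + 1),
        ((i + α.length ≤ (hat A ++ A).length ∧ ((hat A ++ A).drop i).take α.length = α)
          ↔ False) := by
      intro i _
      rw [hwl, hαlen]
      simp only [iff_false]
      rintro ⟨h1, h2⟩
      have hiL : i ≤ L := by omega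
      rcases Nat.eq_zero_or_pos i with rfl | hi0
      · rw [List.drop_zero, hαrot, hL, ← hat_length A, List.take_left] at h2
        exact hBne 0 (by rw [List.rotate_zero]; exact h2)
      · rcases Nat.lt_or_ge i L with hlt | hge
        · rw [hαrot, hL, factor_BA hi0 (show i < A.length by omega)] at h2
          exact hBne i h2
        · have hiL' : i = L := by omega
          subst hiL'
          rw [hαrot, hL, ← hat_length A, List.drop_left, hat_length,
            List.take_length] at h2
          exact hproper (hαrot.trans h2.symm)
    rw [Finset.filter_congr key]
    simp
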